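/- If a sequence (c_i) of reals is bounded in absolute value by a constant M, and two partial-sum sequences S_k and T_k satisfy S_k ≤ T_k ≤ S_{k + ⌊log₂ k⌋} for almost all k, and moreover the number of nonzero terms among c_1,...,c_k is at least k/m for a fixed constant m ≥ 1, then limsup S_k/k = limsup T_k/k, where S_k = Σ_{i=1}^k c_i. -/

import Mathlib

open Filter Finset Topology

private lemma sum_window_bound (c : ℕ → ℝ) (M : ℝ) (hM : ∀ i, |c i| ≤ M) (k L : ℕ) :
    (∑ i ∈ Finset.range (k + L), c i) ≤ (∑ i ∈ Finset.range k, c i) + L * M := by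
  have : ∑ i ∈ Finset.range (k + L), c i
      = (∑ i ∈ Finset.range k, c i) + ∑ i ∈ Finset.Ico k (k + L), c i := by
    simp only [Finset.range_eq_Ico]
    rw [Finset.sum_Ico_consecutive _ (Nat.zero_le k) (Nat.le_add_right k L)]
  rw [this]
  gcongr
  calc ∑ i ∈ Finset.Ico k (k + L), c i ≤ ∑ i ∈ Finset.Ico k (k + L), M :=
        Finset.sum_le_sum fun i _ => (abs_le.1 (hM i)).2
    _ = L * M := by rw [Finset.sum_const, Nat.card_Ico, Nat.add_sub_cancel_left, nsmul_eq_mul]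

/-- If `|c i| ≤ M`, the partial sums `S k` of `c` and a sequence `T` satisfy
eventually `S k ≤ T k ≤ S (k + ⌊log₂ k⌋)`, and the number of nonzero terms among
the first `k` terms of `c` is at least `k/m` (with `m ≥ 1`), then
`limsup S k / k = limsup T k / k`. -/
theorem limsup_eq_of_sandwich_log_window (c : ℕ → ℝ) (M : ℝ) (hM : ∀ i, |c i| ≤ M)
    (T : ℕ → ℝ) (m : ℕ) (hm : 1 ≤ m)
    (hST : ∀ᶠ k in atTop,
      (∑ i ∈ Finset.range k, c i) ≤ T k ∧
        T k ≤ ∑ i ∈ Finset.range (k + Nat.log 2 k), c i)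
    (hnz : ∀ k : ℕ, (k : ℝ) / (m : ℝ) ≤ (Set.ncard {i | i < k ∧ c i ≠ 0} : ℝ)) :
    Filter.limsup (fun k => (∑ i ∈ Finset.range k, c i) / (k : ℝ)) atTop
      = Filter.limsup (fun k => T k / (k : ℝ)) atTop := by
  set u : ℕ → ℝ := fun k => (∑ i ∈ Finset.range k, c i) / (k : ℝ) with hu
  set v : ℕ → ℝ := fun k => T k / (k : ℝ) with hv
  have hM0 : 0 ≤ M := (abs_nonneg _).trans (hM 0)
  -- bound on u
  have hub : ∀ k, |u k| ≤ M := by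
    intro k
    rcases Nat.eq_zero_or_pos k with rfl | hk
    · simpa [hu] using hM0
    · have hSb : |∑ i ∈ Finset.range k, c i| ≤ k * M := by
        calc |∑ i ∈ Finset.range k, c i| ≤ ∑ i ∈ Finset.range k, |c i| :=
              Finset.abs_sum_le_sum_abs _ _
          _ ≤ ∑ i ∈ Finset.range k, M := Finset.sum_le_sum fun i _ => hM i
          _ = k * M := by rw [Finset.sum_const, Finset.card_range]; push_cast; ring
      have hkpos : (0 : ℝ) < k := by exact_mod_cast hk
      rw [hu, abs_div, abs_of_pos hkpos, div_le_iff₀ hkpos]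
      calc |∑ i ∈ Finset.range k, c i| ≤ k * M := hSb
        _ = M * k := by ring
  -- the error sequence
  set e : ℕ → ℝ := fun k => M * (Nat.log 2 k : ℝ) / (k : ℝ) with he
  -- e tends to 0
  have hlog : ∀ k : ℕ, 1 ≤ k → (Nat.log 2 k : ℝ) * Real.log 2 ≤ Real.log k := by
    intro k hk
    have h1 : (2 : ℕ) ^ Nat.log 2 k ≤ k := Nat.pow_log_le_self 2 (by omega)
    have h2 : ((2 : ℝ)) ^ (Nat.log 2 k) ≤ (k : ℝ) := by exact_mod_cast h1
    have := Real.log_le_log (by positivity) h2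
    rwa [Real.log_pow] at this
  have he0 : Tendsto e atTop (𝓝 0) := by
    have hld : Tendsto (fun x : ℝ => Real.log x / x) atTop (𝓝 0) :=
      Real.isLittleO_log_id_atTop.tendsto_div_nhds_zero
    have hldn : Tendsto (fun k : ℕ => Real.log k / (k : ℝ)) atTop (𝓝 0) :=
      hld.comp tendsto_natCast_atTop_atTop
    have hconst : Tendsto (fun k : ℕ => (M / Real.log 2) * (Real.log k / (k : ℝ)))
        atTop (𝓝 0) := by
      simpa using hldn.const_mul (M / Real.log 2)
    apply squeeze_zero' (g := fun k : ℕ => (M / Real.log 2) * (Real.log k / (k : ℝ)))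
    · filter_upwards [eventually_ge_atTop 1] with k hk
      have : (0:ℝ) ≤ (k:ℝ) := Nat.cast_nonneg k
      positivity
    · filter_upwards [eventually_ge_atTop 1] with k hk
      have hkpos : (0 : ℝ) < k := by exact_mod_cast hk
      have hl2 : (0 : ℝ) < Real.log 2 := Real.log_pos (by norm_num)
      have hlogk : (Nat.log 2 k : ℝ) ≤ Real.log k / Real.log 2 := by
        rw [le_div_iff₀ hl2]; exact hlog k hk
      calc e k = M * (Nat.log 2 k : ℝ) / (k : ℝ) := rfl
        _ ≤ M * (Real.log k / Real.log 2) / (k : ℝ) := by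
            gcongr
        _ = (M / Real.log 2) * (Real.log k / (k : ℝ)) := by ring
    · exact hconst
  -- eventual sandwich for v
  have hsand : ∀ᶠ k in atTop, u k ≤ v k ∧ v k ≤ u k + e k := by
    filter_upwards [hST, eventually_ge_atTop 1] with k hk hk1
    have hkpos : (0 : ℝ) < k := by exact_mod_cast hk1
    constructor
    · show (∑ i ∈ Finset.range k, c i) / (k : ℝ) ≤ T k / (k : ℝ)
      gcongr
      exact hk.1
    · have hT : T k ≤ (∑ i ∈ Finset.range k, c i) + (Nat.log 2 k : ℝ) * M :=
        hk.2.trans (sum_window_bound c M hM k (Nat.log 2 k))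
      calc v k = T k / k := rfl
        _ ≤ ((∑ i ∈ Finset.range k, c i) + (Nat.log 2 k : ℝ) * M) / k := by gcongr
        _ = u k + e k := by simp only [hu, he]; ring
  -- boundedness facts
  have hbu_le : IsBoundedUnder (· ≤ ·) atTop u :=
    isBoundedUnder_of ⟨M, fun k => (abs_le.1 (hub k)).2⟩
  have hbu_ge : IsBoundedUnder (· ≥ ·) atTop u :=
    isBoundedUnder_of ⟨-M, fun k => (abs_le.1 (hub k)).1⟩
  have hbe_le : IsBoundedUnder (· ≤ ·) atTop e := he0.isBoundedUnder_le
  have hbe_ge : IsBoundedUnder (· ≥ ·) atTop e := he0.isBoundedUnder_ge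
  have hbv_le : IsBoundedUnder (· ≤ ·) atTop v := by
    obtain ⟨B, hB⟩ := hbe_le
    simp only [eventually_map] at hB
    refine ⟨M + B, ?_⟩
    simp only [eventually_map]
    filter_upwards [hsand, hB] with k hk hkB
    exact hk.2.trans (add_le_add (abs_le.1 (hub k)).2 hkB)
  have hbv_ge : IsBoundedUnder (· ≥ ·) atTop v := by
    refine ⟨-M, ?_⟩
    simp only [eventually_map]
    filter_upwards [hsand] with k hk
    exact le_trans (abs_le.1 (hub k)).1 hk.1
  have hbue_le : IsBoundedUnder (· ≤ ·) atTop (fun k => u k + e k) := by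
    obtain ⟨A, hA⟩ := hbe_le
    simp only [eventually_map] at hA
    refine ⟨M + A, ?_⟩
    simp only [eventually_map]
    filter_upwards [hA] with k hk
    exact add_le_add (abs_le.1 (hub k)).2 hk
  -- two inequalities
  have h1 : limsup u atTop ≤ limsup v atTop :=
    limsup_le_limsup (hsand.mono fun k hk => hk.1) hbu_ge.isCoboundedUnder_le hbv_le
  have h2 : limsup v atTop ≤ limsup u atTop := by
    have hle : limsup v atTop ≤ limsup (fun k => u k + e k) atTop :=
      limsup_le_limsup (hsand.mono fun k hk => hk.2) hbv_ge.isCoboundedUnder_le hbue_le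
    have hadd : limsup (fun k => u k + e k) atTop ≤ limsup u atTop + limsup e atTop :=
      limsup_add_le hbu_ge hbu_le hbe_ge.isCoboundedUnder_le hbe_le
    have helim : limsup e atTop = 0 := he0.limsup_eq
    calc limsup v atTop ≤ limsup (fun k => u k + e k) atTop := hle
      _ ≤ limsup u atTop + limsup e atTop := hadd
      _ = limsup u atTop := by rw [helim, add_zero]
  exact le_antisymm h1 h2
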